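/- Conversely, if the pedigrees P(G) and P(G') obtained from the reduction are isomorphic, then the bipartite graphs G and G' (with no isolated vertices) are isomorphic. -/

import Mathlib

/-- Vertices of the pedigree `P(G)` built from a bipartite graph `G`:
`founder u s` is `u^s`, `child u v s` is `(u,v)^s`, `grand u u' v` is
`(u,u',v)^f`. Gender `false` is female, `true` is male. -/
inductive RV (V1 V2 : Type*) : Type _
  | founder : V1 → Bool → RV V1 V2
  | child : V1 → V2 → Bool → RV V1 V2
  | grand : V1 → V1 → V2 → RV V1 V2

variable {V1 V2 V1' V2' : Type*}

/-- The vertices that actually occur in `P(G)` for adjacency relation `A`. -/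
def RValid (A : V1 → V2 → Prop) : RV V1 V2 → Prop
  | .founder u _ => ∃ v, A u v
  | .child u v _ => A u v
  | .grand u u' v => A u v ∧ A u' v

/-- The edges of `P(G)`: `u^s → (u,v)^{s'}` for each edge `(u,v)` and genders
`s, s'`, and `(u,v)^m → (u,u',v)^f`, `(u',v)^f → (u,u',v)^f`. -/
def REdge : RV V1 V2 → RV V1 V2 → Prop
  | .founder u _, .child w _ _ => u = w
  | .child u v s, .grand a b w => v = w ∧ ((s = true ∧ a = u) ∨ (s = false ∧ b = u))
  | _, _ => False

/-- Genders in `P(G)`. -/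
def RGender : RV V1 V2 → Bool
  | .founder _ s => s
  | .child _ _ s => s
  | .grand _ _ _ => false

/-- The vertex set of the pedigree `P(G)`. -/
def PV (A : V1 → V2 → Prop) : Type _ := {x : RV V1 V2 // RValid A x}

lemma no_edge_to_founder (x : RV V1 V2) (u : V1) (s : Bool) :
    ¬ REdge x (.founder u s) := by cases x <;> simp [REdge]

lemma no_edge_from_grand (x : RV V1 V2) (u u' : V1) (v : V2) :
    ¬ REdge (.grand u u' v) x := by cases x <;> simp [REdge]

section
variable {A : V1 → V2 → Prop} {A' : V1' → V2' → Prop} (φ : PV A ≃ PV A')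
  (hE : ∀ a b : PV A, REdge a.val b.val ↔ REdge (φ a).val (φ b).val)
  (hG : ∀ x : PV A, RGender x.val = RGender (φ x).val)
include hE hG

omit hG in
lemma symm_hE : ∀ a b : PV A', REdge a.val b.val ↔ REdge (φ.symm a).val (φ.symm b).val := by
  intro a b
  have := hE (φ.symm a) (φ.symm b)
  simpa using this.symm

omit hE in
lemma symm_hG : ∀ x : PV A', RGender x.val = RGender (φ.symm x).val := by
  intro x
  have := hG (φ.symm x)
  simpa using this.symm

lemma founder_image (u : V1) (s : Bool) (h : RValid A (.founder u s)) :
    ∃ w, (φ ⟨.founder u s, h⟩).val = .founder w s := by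
  rcases hval : (φ ⟨.founder u s, h⟩).val with ⟨w, s'⟩ | ⟨w, v', s'⟩ | ⟨a, b, w⟩
  · refine ⟨w, ?_⟩
    have hgen := hG ⟨.founder u s, h⟩
    rw [hval] at hgen
    simp only [RGender] at hgen
    rw [hgen]
  · -- child with a founder parent, contradiction
    exfalso
    have hvalid : RValid A' (.child w v' s') := hval ▸ (φ ⟨.founder u s, h⟩).property
    set p : PV A' := ⟨.founder w true, ⟨v', hvalid⟩⟩ with hp
    have hedge : REdge p.val (φ ⟨.founder u s, h⟩).val := by
      rw [hval]; simp [REdge, hp]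
    have := (hE (φ.symm p) ⟨.founder u s, h⟩).2 (by simpa using hedge)
    exact no_edge_to_founder _ u s this
  · exfalso
    have hvalid : RValid A' (.grand a b w) := hval ▸ (φ ⟨.founder u s, h⟩).property
    set p : PV A' := ⟨.child a w true, hvalid.1⟩ with hp
    have hedge : REdge p.val (φ ⟨.founder u s, h⟩).val := by
      rw [hval]; simp [REdge, hp]
    have := (hE (φ.symm p) ⟨.founder u s, h⟩).2 (by simpa using hedge)
    exact no_edge_to_founder _ u s this

lemma grand_image (hno2' : ∀ v : V2', ∃ u, A' u v)
    (u u' : V1) (v : V2) (h : RValid A (.grand u u' v)) :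
    ∃ a b w, (φ ⟨.grand u u' v, h⟩).val = .grand a b w := by
  rcases hval : (φ ⟨.grand u u' v, h⟩).val with ⟨w, s'⟩ | ⟨w, v', s'⟩ | ⟨a, b, w⟩
  · exfalso
    have hvalid : RValid A' (.founder w s') := hval ▸ (φ ⟨.grand u u' v, h⟩).property
    obtain ⟨w2, hw2⟩ := founder_image φ.symm (symm_hE φ hE) (symm_hG φ hG) w s' hvalid
    have : (⟨.founder w s', hvalid⟩ : PV A') = φ ⟨.grand u u' v, h⟩ := Subtype.ext hval.symm
    rw [this, Equiv.symm_apply_apply φ ⟨.grand u u' v, h⟩] at hw2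
    exact absurd hw2 (by simp)
  · exfalso
    have hvalid : RValid A' (.child w v' s') := hval ▸ (φ ⟨.grand u u' v, h⟩).property
    obtain ⟨b, hb⟩ := hno2' v'
    rcases s' with _ | _
    · set z : PV A' := ⟨.grand b w v', ⟨hb, hvalid⟩⟩ with hz
      have hedge : REdge (φ ⟨.grand u u' v, h⟩).val z.val := by
        rw [hval]; simp [REdge, hz]
      have := (hE ⟨.grand u u' v, h⟩ (φ.symm z)).2 (by simpa using hedge)
      exact no_edge_from_grand _ u u' v this
    · set z : PV A' := ⟨.grand w b v', ⟨hvalid, hb⟩⟩ with hz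
      have hedge : REdge (φ ⟨.grand u u' v, h⟩).val z.val := by
        rw [hval]; simp [REdge, hz]
      have := (hE ⟨.grand u u' v, h⟩ (φ.symm z)).2 (by simpa using hedge)
      exact no_edge_from_grand _ u u' v this
  · exact ⟨a, b, w, rfl⟩

lemma child_image (hno2 : ∀ v : V2, ∃ u, A u v)
    (u : V1) (v : V2) (s : Bool) (h : A u v) :
    ∃ a w, (φ ⟨.child u v s, h⟩).val = .child a w s := by
  rcases hval : (φ ⟨.child u v s, h⟩).val with ⟨w, s'⟩ | ⟨a, w, s'⟩ | ⟨a, b, w⟩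
  · exfalso
    have hvalid : RValid A' (.founder w s') := hval ▸ (φ ⟨.child u v s, h⟩).property
    obtain ⟨w2, hw2⟩ := founder_image φ.symm (symm_hE φ hE) (symm_hG φ hG) w s' hvalid
    have : (⟨.founder w s', hvalid⟩ : PV A') = φ ⟨.child u v s, h⟩ := Subtype.ext hval.symm
    rw [this, Equiv.symm_apply_apply φ ⟨.child u v s, h⟩] at hw2
    exact absurd hw2 (by simp)
  · refine ⟨a, w, ?_⟩
    have hgen := hG ⟨.child u v s, h⟩
    rw [hval] at hgen
    simp only [RGender] at hgen
    rw [hgen]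
  · exfalso
    have hvalid : RValid A' (.grand a b w) := hval ▸ (φ ⟨.child u v s, h⟩).property
    obtain ⟨a2, b2, w2, hw2⟩ := grand_image φ.symm (symm_hE φ hE) (symm_hG φ hG) hno2
      a b w hvalid
    have : (⟨.grand a b w, hvalid⟩ : PV A') = φ ⟨.child u v s, h⟩ := Subtype.ext hval.symm
    rw [this, Equiv.symm_apply_apply φ ⟨.child u v s, h⟩] at hw2
    exact absurd hw2 (by simp)

lemma maps_exist (hno1 : ∀ u : V1, ∃ v, A u v) (hno2 : ∀ v : V2, ∃ u, A u v)
    (hno2' : ∀ v : V2', ∃ u, A' u v) :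
    ∃ (f : V1 → V1') (g : V2 → V2'),
      (∀ u s (h : RValid A (.founder u s)),
        (φ ⟨.founder u s, h⟩).val = .founder (f u) s) ∧
      (∀ u v s (h : A u v),
        (φ ⟨.child u v s, h⟩).val = .child (f u) (g v) s) := by
  -- definition of f
  have hf0 : ∀ u : V1, ∃ w, (φ ⟨.founder u true, hno1 u⟩).val = .founder w true :=
    fun u => founder_image φ hE hG u true (hno1 u)
  choose f hf using hf0
  -- child first coordinate
  have hchild : ∀ u v s (h : A u v), ∃ w,
      (φ ⟨.child u v s, h⟩).val = .child (f u) w s := by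
    intro u v s h
    obtain ⟨a, w, hval⟩ := child_image φ hE hG hno2 u v s h
    have hedge : REdge (RV.founder u true : RV V1 V2) (.child u v s) := by simp [REdge]
    have h2 := (hE ⟨.founder u true, hno1 u⟩ ⟨.child u v s, h⟩).1 hedge
    rw [hf u, hval] at h2
    simp only [REdge] at h2
    exact ⟨w, by rw [hval, ← h2]⟩
  -- founder with gender false
  have hfound : ∀ u s (h : RValid A (.founder u s)),
      (φ ⟨.founder u s, h⟩).val = .founder (f u) s := by
    intro u s h
    rcases s with _ | _
    · obtain ⟨w, hw⟩ := founder_image φ hE hG u false h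
      obtain ⟨v, hv⟩ := hno1 u
      obtain ⟨w2, hc⟩ := hchild u v true hv
      have hedge : REdge (RV.founder u false : RV V1 V2) (.child u v true) := by simp [REdge]
      have h2 := (hE ⟨.founder u false, h⟩ ⟨.child u v true, hv⟩).1 hedge
      rw [hw, hc] at h2
      simp only [REdge] at h2
      rw [hw, h2]
    · exact hf u
  -- second coordinate well-defined
  have hpair : ∀ u1 u2 v (h1 : A u1 v) (h2 : A u2 v) w1 w2,
      (φ ⟨.child u1 v true, h1⟩).val = .child (f u1) w1 true →
      (φ ⟨.child u2 v false, h2⟩).val = .child (f u2) w2 false → w1 = w2 := by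
    intro u1 u2 v h1 h2 w1 w2 hc1 hc2
    obtain ⟨a, b, r, hg⟩ := grand_image φ hE hG hno2' u1 u2 v ⟨h1, h2⟩
    have he1 : REdge (RV.child u1 v true : RV V1 V2) (.grand u1 u2 v) := by simp [REdge]
    have he2 : REdge (RV.child u2 v false : RV V1 V2) (.grand u1 u2 v) := by simp [REdge]
    have k1 := (hE ⟨.child u1 v true, h1⟩ ⟨.grand u1 u2 v, ⟨h1, h2⟩⟩).1 he1
    have k2 := (hE ⟨.child u2 v false, h2⟩ ⟨.grand u1 u2 v, ⟨h1, h2⟩⟩).1 he2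
    rw [hc1, hg] at k1
    rw [hc2, hg] at k2
    simp only [REdge] at k1 k2
    rw [k1.1, k2.1]
  choose W hW using hchild
  refine ⟨f, fun v => W (hno2 v).choose v true (hno2 v).choose_spec, hfound, ?_⟩
  intro u v s h
  set u0 := (hno2 v).choose with hu0
  set h0 := (hno2 v).choose_spec
  have hg0 := hW u0 v true h0
  suffices hs : W u v s h = W u0 v true h0 by rw [hW u v s h, hs]
  rcases s with _ | _
  · exact (hpair u0 u v h0 h _ _ hg0 (hW u v false h)).symm
  · have e1 : W u v true h = W u v false h :=
      hpair u u v h h _ _ (hW u v true h) (hW u v false h)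
    have e2 : W u0 v true h0 = W u v false h :=
      hpair u0 u v h0 h _ _ hg0 (hW u v false h)
    rw [e1, e2]

end

/-- conversely, if the pedigrees `P(G)` and `P(G')` are
isomorphic as pedigrees, then the bipartite graphs `G` and `G'` (with no
isolated vertices) are isomorphic. -/
theorem reduction_backward [Fintype V1] [Fintype V2] [Fintype V1'] [Fintype V2']
    (A : V1 → V2 → Prop) (A' : V1' → V2' → Prop)
    (hno1 : ∀ u : V1, ∃ v, A u v) (hno2 : ∀ v : V2, ∃ u, A u v)
    (hno1' : ∀ u : V1', ∃ v, A' u v) (hno2' : ∀ v : V2', ∃ u, A' u v)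
    (hped : ∃ φ : PV A ≃ PV A',
      (∀ a b : PV A, REdge a.val b.val ↔ REdge (φ a).val (φ b).val) ∧
      (∀ x : PV A, RGender x.val = RGender (φ x).val)) :
    ∃ (α : V1 ≃ V1') (β : V2 ≃ V2'), ∀ u v, A u v ↔ A' (α u) (β v) := by
  obtain ⟨φ, hE, hG⟩ := hped
  obtain ⟨f, g, hf, hc⟩ := maps_exist φ hE hG hno1 hno2 hno2'
  obtain ⟨f', g', hf', hc'⟩ :=
    maps_exist φ.symm (symm_hE φ hE) (symm_hG φ hG) hno1' hno2' hno2
  have hAA' : ∀ u v, A u v → A' (f u) (g v) := by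
    intro u v h
    have := (φ ⟨.child u v true, h⟩).property
    rwa [hc u v true h] at this
  have hA'A : ∀ u v, A' u v → A (f' u) (g' v) := by
    intro u v h
    have := (φ.symm ⟨.child u v true, h⟩).property
    rwa [hc' u v true h] at this
  have hfl : ∀ u, f' (f u) = u := by
    intro u
    obtain ⟨v, hv⟩ := hno1 u
    have hvv' : RValid A' (.founder (f u) true) := ⟨g v, hAA' u v hv⟩
    have h2 := hf' (f u) true hvv'
    have heq : (⟨.founder (f u) true, hvv'⟩ : PV A') = φ ⟨.founder u true, hno1 u⟩ :=
      Subtype.ext (hf u true (hno1 u)).symm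
    rw [heq, Equiv.symm_apply_apply φ ⟨.founder u true, hno1 u⟩] at h2
    have h3 : (RV.founder u true : RV V1 V2) = .founder (f' (f u)) true := h2
    injection h3 with h4 _
    exact h4.symm
  have hfr : ∀ u, f (f' u) = u := by
    intro u
    obtain ⟨v, hv⟩ := hno1' u
    have hvv : RValid A (.founder (f' u) true) := ⟨g' v, hA'A u v hv⟩
    have h2 := hf (f' u) true hvv
    have heq : (⟨.founder (f' u) true, hvv⟩ : PV A) = φ.symm ⟨.founder u true, hno1' u⟩ :=
      Subtype.ext (hf' u true (hno1' u)).symm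
    rw [heq, Equiv.apply_symm_apply φ ⟨.founder u true, hno1' u⟩] at h2
    have h3 : (RV.founder u true : RV V1' V2') = .founder (f (f' u)) true := h2
    injection h3 with h4 _
    exact h4.symm
  have hgl : ∀ v, g' (g v) = v := by
    intro v
    obtain ⟨u, hu⟩ := hno2 v
    have h2 := hc' (f u) (g v) true (hAA' u v hu)
    have heq : (⟨.child (f u) (g v) true, hAA' u v hu⟩ : PV A') = φ ⟨.child u v true, hu⟩ :=
      Subtype.ext (hc u v true hu).symm
    rw [heq, Equiv.symm_apply_apply φ ⟨.child u v true, hu⟩] at h2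
    have h3 : (RV.child u v true : RV V1 V2) = .child (f' (f u)) (g' (g v)) true := h2
    injection h3 with _ h4 _
    exact h4.symm
  have hgr : ∀ v, g (g' v) = v := by
    intro v
    obtain ⟨u, hu⟩ := hno2' v
    have h2 := hc (f' u) (g' v) true (hA'A u v hu)
    have heq : (⟨.child (f' u) (g' v) true, hA'A u v hu⟩ : PV A) = φ.symm ⟨.child u v true, hu⟩ :=
      Subtype.ext (hc' u v true hu).symm
    rw [heq, Equiv.apply_symm_apply φ ⟨.child u v true, hu⟩] at h2
    have h3 : (RV.child u v true : RV V1' V2') = .child (f (f' u)) (g (g' v)) true := h2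
    injection h3 with _ h4 _
    exact h4.symm
  refine ⟨⟨f, f', hfl, hfr⟩, ⟨g, g', hgl, hgr⟩, fun u v => ⟨hAA' u v, fun h' => ?_⟩⟩
  have := hA'A (f u) (g v) h'
  rwa [hfl, hgl] at this
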